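/- Let φ : G₁ → G₂ be an isomorphism of profinite groups, where G₁ and G₂ fit into extensions 1 → Δᵢ → Gᵢ → Qᵢ → 1 with Δ₁, Δ₂ topologically finitely generated closed normal subgroups and Q₁, Q₂ very elastic profinite groups. Then φ(Δ₁) = Δ₂. -/

import Mathlib

/-- A closed subgroup `N` of a topological group is *topologically finitely generated* if it is
the topological closure of the subgroup generated by a finite subset of `N`. -/
def TopFG {G : Type*} [Group G] [TopologicalSpace G] [IsTopologicalGroup G]
    (N : Subgroup G) : Prop :=
  ∃ S : Finset G, (S : Set G) ⊆ (N : Set G) ∧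
    (Subgroup.closure (S : Set G)).topologicalClosure = N

/-- A topological group `G` is *elastic* if every topologically finitely generated closed
normal subgroup `N` of an open subgroup `H` of `G` is either trivial or open in `G`. -/
def IsElastic (G : Type*) [Group G] [TopologicalSpace G] [IsTopologicalGroup G] : Prop :=
  ∀ H N : Subgroup G, IsOpen (H : Set G) → N ≤ H → IsClosed (N : Set G) →
    (∀ h ∈ H, ∀ n ∈ N, h * n * h⁻¹ ∈ N) → TopFG N →
    N = ⊥ ∨ IsOpen (N : Set G)

/-- `G` is *very elastic* if it is elastic and not topologically finitely generated. -/
def IsVeryElastic (G : Type*) [Group G] [TopologicalSpace G] [IsTopologicalGroup G] : Prop :=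
  IsElastic G ∧ ¬ TopFG (⊤ : Subgroup G)

lemma subgroup_tc_mono {G : Type*} [Group G] [TopologicalSpace G] [IsTopologicalGroup G]
    {s t : Subgroup G} (h : s ≤ t) : s.topologicalClosure ≤ t.topologicalClosure :=
  fun _ hx => closure_mono (SetLike.coe_subset_coe.mpr h) hx

/-- In a compact group, if an open subgroup is topologically finitely generated,
then so is the whole group. -/
lemma topfg_top_of_isOpen {G : Type*} [Group G] [TopologicalSpace G] [IsTopologicalGroup G]
    [CompactSpace G] (N : Subgroup G) (hN : IsOpen (N : Set G)) (h : TopFG N) :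
    TopFG (⊤ : Subgroup G) := by
  obtain ⟨S, hS, hScl⟩ := h
  have hfin : Finite (G ⧸ N) := N.quotient_finite_of_isOpen hN
  have : Fintype (G ⧸ N) := Fintype.ofFinite _
  classical
  let T : Finset G := Finset.univ.image (Quotient.out : G ⧸ N → G)
  refine ⟨S ∪ T, by simp, ?_⟩
  rw [eq_top_iff]
  intro g _
  set t : G := (Quotient.out ((g : G ⧸ N))) with ht
  have hmk : ((t : G) : G ⧸ N) = (g : G ⧸ N) := Quotient.out_eq _
  have hn : t⁻¹ * g ∈ N := QuotientGroup.eq.mp hmk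
  have htT : t ∈ (Subgroup.closure ((S ∪ T : Finset G) : Set G)).topologicalClosure := by
    apply Subgroup.le_topologicalClosure
    apply Subgroup.subset_closure
    simp only [Finset.coe_union, Set.mem_union]
    right
    simp [T]
    exact ⟨_, rfl⟩
  have hmono : N ≤ (Subgroup.closure ((S ∪ T : Finset G) : Set G)).topologicalClosure := by
    rw [← hScl]
    exact subgroup_tc_mono
      (Subgroup.closure_mono (by simp only [Finset.coe_union]; exact Set.subset_union_left))
  have : g = t * (t⁻¹ * g) := by group
  rw [this]
  exact Subgroup.mul_mem _ htT (hmono hn)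

/-- Key step: the image of `Δ₁` under a continuous surjection lands in `Δ₂`. -/
lemma map_le_aux {G₁ G₂ : Type*}
    [Group G₁] [TopologicalSpace G₁] [IsTopologicalGroup G₁] [CompactSpace G₁]
    [Group G₂] [TopologicalSpace G₂] [IsTopologicalGroup G₂] [CompactSpace G₂]
    (φ : G₁ →* G₂) (hφ : Continuous φ) (hs : Function.Surjective φ)
    (Δ₁ : Subgroup G₁) (Δ₂ : Subgroup G₂) [Δ₁.Normal] [Δ₂.Normal]
    (hΔ₁c : IsClosed (Δ₁ : Set G₁)) (hΔ₂c : IsClosed (Δ₂ : Set G₂))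
    (hΔ₁fg : TopFG Δ₁) (hQ₂ : IsVeryElastic (G₂ ⧸ Δ₂)) :
    Δ₁.map φ ≤ Δ₂ := by
  classical
  haveI : IsClosed ((Δ₂ : Subgroup G₂) : Set G₂) := hΔ₂c
  set f : G₁ →* G₂ ⧸ Δ₂ := (QuotientGroup.mk' Δ₂).comp φ with hf
  have hfc : Continuous f := by
    have h : (f : G₁ → G₂ ⧸ Δ₂) = (QuotientGroup.mk : G₂ → G₂ ⧸ Δ₂) ∘ φ := rfl
    rw [h]; exact QuotientGroup.continuous_mk.comp hφ
  have hfs : Function.Surjective f :=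
    (QuotientGroup.mk'_surjective Δ₂).comp hs
  set N : Subgroup (G₂ ⧸ Δ₂) := Δ₁.map f with hNdef
  have hNclosed : IsClosed (N : Set (G₂ ⧸ Δ₂)) := by
    have : IsCompact (f '' (Δ₁ : Set G₁)) := (hΔ₁c.isCompact).image hfc
    rw [hNdef, Subgroup.coe_map]
    exact this.isClosed
  have hNnormal : N.Normal := Subgroup.Normal.map inferInstance f hfs
  have hNfg : TopFG N := by
    obtain ⟨S, hS, hScl⟩ := hΔ₁fg
    refine ⟨S.image f, ?_, ?_⟩
    · intro x hx
      simp only [Finset.coe_image, Set.mem_image] at hx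
      obtain ⟨y, hy, rfl⟩ := hx
      exact ⟨y, hS hy, rfl⟩
    · apply le_antisymm
      · apply Subgroup.topologicalClosure_minimal _ _ hNclosed
        rw [Subgroup.closure_le]
        intro x hx
        simp only [Finset.coe_image, Set.mem_image] at hx
        obtain ⟨y, hy, rfl⟩ := hx
        exact ⟨y, hS hy, rfl⟩
      · rw [hNdef, ← hScl]
        intro x hx
        obtain ⟨y, hy, rfl⟩ := hx
        have h1 : f y ∈ _root_.closure (f '' ((Subgroup.closure (S : Set G₁) : Subgroup G₁) : Set G₁)) :=
          (image_closure_subset_closure_image hfc) ⟨y, hy, rfl⟩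
        refine closure_mono ?_ h1
        intro z hz
        obtain ⟨w, hw, rfl⟩ := hz
        have : f w ∈ Subgroup.closure ((S.image f : Finset (G₂ ⧸ Δ₂)) : Set (G₂ ⧸ Δ₂)) := by
          rw [Finset.coe_image, ← MonoidHom.map_closure]
          exact ⟨w, hw, rfl⟩
        exact this
  have := hQ₂.1 ⊤ N (by simp) le_top hNclosed
    (fun h _ n hn => hNnormal.conj_mem n hn h) hNfg
  rcases this with hbot | hopen
  · rintro x ⟨d, hd, rfl⟩
    have : f d ∈ N := ⟨d, hd, rfl⟩
    rw [hbot, Subgroup.mem_bot] at this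
    have : φ d ∈ (QuotientGroup.mk' Δ₂).ker := this
    rwa [QuotientGroup.ker_mk'] at this
  · exact absurd (topfg_top_of_isOpen N hopen hNfg) hQ₂.2

/-- Let `φ : G₁ → G₂` be an isomorphism of profinite groups, where each `Gᵢ` has a
topologically finitely generated closed normal subgroup `Δᵢ` with very elastic quotient
`Gᵢ ⧸ Δᵢ`.  Then `φ(Δ₁) = Δ₂`. -/
theorem stmt4 {G₁ G₂ : Type*}
    [Group G₁] [TopologicalSpace G₁] [IsTopologicalGroup G₁]
    [CompactSpace G₁] [TotallyDisconnectedSpace G₁] [T2Space G₁]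
    [Group G₂] [TopologicalSpace G₂] [IsTopologicalGroup G₂]
    [CompactSpace G₂] [TotallyDisconnectedSpace G₂] [T2Space G₂]
    (φ : G₁ ≃* G₂) (hφ : Continuous φ) (hφ' : Continuous φ.symm)
    (Δ₁ : Subgroup G₁) (Δ₂ : Subgroup G₂) [Δ₁.Normal] [Δ₂.Normal]
    (hΔ₁c : IsClosed (Δ₁ : Set G₁)) (hΔ₂c : IsClosed (Δ₂ : Set G₂))
    (hΔ₁fg : TopFG Δ₁) (hΔ₂fg : TopFG Δ₂)
    (hQ₁ : IsVeryElastic (G₁ ⧸ Δ₁)) (hQ₂ : IsVeryElastic (G₂ ⧸ Δ₂)) :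
    Δ₁.map φ.toMonoidHom = Δ₂ := by
  apply le_antisymm
  · exact map_le_aux φ.toMonoidHom hφ φ.surjective Δ₁ Δ₂ hΔ₁c hΔ₂c hΔ₁fg hQ₂
  · have h2 := map_le_aux φ.symm.toMonoidHom hφ' φ.symm.surjective Δ₂ Δ₁ hΔ₂c hΔ₁c hΔ₂fg hQ₁
    intro x hx
    have : φ.symm x ∈ Δ₁ := h2 ⟨x, hx, rfl⟩
    exact ⟨φ.symm x, this, φ.apply_symm_apply x⟩
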